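/- Let r < 0, σ < 0, a = r/(2σ) ∈ (0,1), and λ₀ > 0. If a function λ satisfies λ(t) = λ₀ exp(∫₀ᵗ F(τ)dτ) with F(τ) ≥ s(τ) - r where s(τ) = r/(1-(1-a)e^{rτ}), and λ(t) → λ∞, then λ₀ ≤ λ∞ · (2σ/r). In particular, with λ₀ = λ_g, λ∞ = λ_h, σ a lower bound for the Gauss curvature of g, and r/2 = κ_h the constant curvature of h, one gets λ_g ≤ (λ_h/κ_h)·σ. -/

import Mathlib

/-- Abstract form of the Sharp Upper Bound theorem: if
`λ t = λ₀ exp(∫₀ᵗ F)` with `F τ ≥ s τ - r`, `s τ = r/(1-(1-a)e^{rτ})`,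
`a = r/(2σ) ∈ (0,1)`, `λ₀ > 0`, and `λ t → λ∞`, then `λ₀ ≤ λ∞ · 2σ/r`. -/
theorem sharp_upper_bound_abstract (r σ lam₀ lam_inf : ℝ)
    (hr : r < 0) (hσ : σ < 0) (hlam₀ : 0 < lam₀)
    (a : ℝ) (haa : a = r / (2 * σ)) (ha : a ∈ Set.Ioo (0:ℝ) 1)
    (F : ℝ → ℝ) (hF : Continuous F)
    (hFbd : ∀ τ : ℝ, 0 ≤ τ → r / (1 - (1 - a) * Real.exp (r * τ)) - r ≤ F τ)
    (lam : ℝ → ℝ)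
    (hlam : ∀ t : ℝ, 0 ≤ t → lam t = lam₀ * Real.exp (∫ τ in (0:ℝ)..t, F τ))
    (hlim : Filter.Tendsto lam Filter.atTop (nhds lam_inf)) :
    lam₀ ≤ lam_inf * (2 * σ) / r := by
  obtain ⟨ha0, ha1⟩ := ha
  set D : ℝ → ℝ := fun τ => 1 - (1 - a) * Real.exp (r * τ) with hDdef
  have hDcont : Continuous D := by continuity
  have hDge : ∀ τ : ℝ, 0 ≤ τ → a ≤ D τ := by
    intro τ hτ
    have h1 : Real.exp (r * τ) ≤ 1 := by
      rw [← Real.exp_zero]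
      exact Real.exp_le_exp.2 (mul_nonpos_of_nonpos_of_nonneg hr.le hτ)
    have h2 : (1 - a) * Real.exp (r * τ) ≤ 1 - a := by nlinarith
    show a ≤ 1 - (1 - a) * Real.exp (r * τ)
    linarith
  -- key: for t ≥ 0, lam₀ * a ≤ lam t
  have hkey : ∀ t : ℝ, 0 ≤ t → lam₀ * a ≤ lam t := by
    intro t ht
    have hDne : ∀ τ ∈ Set.uIcc (0:ℝ) t, D τ ≠ 0 := by
      intro τ hτ
      rw [Set.uIcc_of_le ht] at hτ
      have := hDge τ hτ.1
      linarith
    -- FTC for g τ = - log (D τ)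
    have hderiv : ∀ τ ∈ Set.uIcc (0:ℝ) t,
        HasDerivAt (fun τ => -Real.log (D τ)) (r / D τ - r) τ := by
      intro τ hτ
      have hE : HasDerivAt (fun τ => Real.exp (r * τ)) (Real.exp (r * τ) * r) τ := by
        have h : HasDerivAt (fun τ : ℝ => r * τ) r τ := by
          simpa using (hasDerivAt_id τ).const_mul r
        simpa using h.exp
      have hD' : HasDerivAt D (-((1 - a) * (Real.exp (r * τ) * r))) τ :=
        (hE.const_mul (1 - a)).const_sub 1
      have hne := hDne τ hτ
      have hres : HasDerivAt (fun y => -Real.log (D y)) _ τ := (hD'.log hne).neg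
      convert hres using 1
      have hEq : D τ = 1 - (1 - a) * Real.exp (r * τ) := rfl
      rw [neg_div, neg_neg, eq_div_iff hne, sub_mul, div_mul_cancel₀ _ hne, hEq]
      ring
    have hsInt : IntervalIntegrable (fun τ => r / D τ - r) MeasureTheory.volume 0 t := by
      apply ContinuousOn.intervalIntegrable
      apply ContinuousOn.sub _ continuousOn_const
      exact ContinuousOn.div continuousOn_const hDcont.continuousOn hDne
    have hFTC := intervalIntegral.integral_eq_sub_of_hasDerivAt hderiv hsInt
    have hmono : (∫ τ in (0:ℝ)..t, (r / D τ - r)) ≤ ∫ τ in (0:ℝ)..t, F τ := by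
      apply intervalIntegral.integral_mono_on ht hsInt (hF.intervalIntegrable 0 t)
      intro τ hτ
      exact hFbd τ hτ.1
    have hD0 : D 0 = a := by simp [hDdef]
    have hlogDt : Real.log (D t) ≤ 0 := by
      have h1 : D t ≤ 1 := by
        show 1 - (1 - a) * Real.exp (r * t) ≤ 1
        nlinarith [Real.exp_pos (r * t)]
      exact Real.log_nonpos (by linarith [hDge t ht]) h1
    have hlow : Real.log a ≤ ∫ τ in (0:ℝ)..t, F τ := by
      rw [hFTC, hD0] at hmono
      linarith
    have hexp := Real.exp_le_exp.2 hlow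
    rw [Real.exp_log ha0] at hexp
    rw [hlam t ht]
    nlinarith
  have hle : lam₀ * a ≤ lam_inf :=
    ge_of_tendsto hlim (Filter.eventually_atTop.2 ⟨0, hkey⟩)
  rw [haa] at hle
  rw [le_div_iff_of_neg hr]
  have h2σ : 2 * σ < 0 := by linarith
  have heq : lam₀ * (r / (2 * σ)) * (2 * σ) = lam₀ * r := by
    rw [mul_assoc, div_mul_cancel₀ _ h2σ.ne]
  have hmul := mul_le_mul_of_nonpos_right hle h2σ.le
  linarith
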